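/- (Intermediate claim in the proof of Theorem 1) Let a monotone collision-free motion plan for M(φ) have distance cost d*(M(φ)), and let R⁺ denote the set of literal agents that move after the last clause agent moves. Then for every variable α of φ, R⁺ cannot contain both a literal agent of a positive occurrence of α and a literal agent of a negative occurrence of α. -/

import Mathlib

/-- A MAPF instance: an undirected graph, a finite set of agents,
and for each agent a start and a goal vertex, with starts pairwise distinct
and goals pairwise distinct. -/
structure MAPF where
  V : Type
  G : SimpleGraph V
  A : Type
  fintypeA : Fintype A
  s : A → V
  t : A → V
  s_inj : Function.Injective s
  t_inj : Function.Injective t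

attribute [instance] MAPF.fintypeA

/-- A feasible trajectory for agent `r`. -/
def MAPF.IsTrajectory (M : MAPF) (r : M.A) (π : ℕ → M.V) : Prop :=
  π 0 = M.s r ∧
  (∃ T : ℕ, ∀ τ : ℕ, T ≤ τ → π τ = M.t r) ∧
  (∀ τ : ℕ, 0 < τ → π (τ - 1) = π τ ∨ M.G.Adj (π (τ - 1)) (π τ))

/-- Length of the induced path `P(r)` (trajectory with consecutive repetitions
compressed): the number of time steps at which the vertex changes. -/
noncomputable def pathLength {V : Type} (π : ℕ → V) : ℕ :=
  {τ : ℕ | 0 < τ ∧ π (τ - 1) ≠ π τ}.ncard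

/-- A motion plan: one trajectory per agent. -/
def MAPF.IsPlan (M : MAPF) (π : M.A → ℕ → M.V) : Prop :=
  ∀ r : M.A, M.IsTrajectory r (π r)

/-- Collision-free: no two agents share a vertex at a time step, and no two agents
traverse the same edge in opposite directions at the same time step. -/
def MAPF.CollisionFree (M : MAPF) (π : M.A → ℕ → M.V) : Prop :=
  ∀ r r' : M.A, r ≠ r' →
    (∀ τ : ℕ, π r τ ≠ π r' τ) ∧
    (∀ τ : ℕ, 0 < τ → ¬(π r (τ - 1) = π r' τ ∧ π r τ = π r' (τ - 1)))

/-- Distance cost of a motion plan: sum of the path lengths of the agents. -/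
noncomputable def MAPF.cost (M : MAPF) (π : M.A → ℕ → M.V) : ℕ :=
  ∑ r : M.A, pathLength (π r)

/-- `d*(M)`: sum over agents of the graph distance from start to goal. -/
noncomputable def MAPF.dStar (M : MAPF) : ℕ :=
  ∑ r : M.A, M.G.dist (M.s r) (M.t r)

open scoped Classical in
/-- The active interval of an agent: from the first time it leaves its start to
the last time it reaches its target; empty if the agent never moves. -/
noncomputable def MAPF.activeInterval (M : MAPF) (r : M.A) (π : ℕ → M.V) : Set ℕ :=
  if {τ : ℕ | π (τ + 1) ≠ M.s r} = ∅ then ∅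
  else Set.Icc (sInf {τ : ℕ | π (τ + 1) ≠ M.s r})
               (sSup {τ : ℕ | 0 < τ ∧ π (τ - 1) ≠ M.t r})

/-- A monotone motion plan: the active intervals of distinct agents are pairwise
disjoint (the agents move one by one, each moving once). -/
def MAPF.MonotonePlan (M : MAPF) (π : M.A → ℕ → M.V) : Prop :=
  ∀ r r' : M.A, r ≠ r' →
    Disjoint (M.activeInterval r (π r)) (M.activeInterval r' (π r'))

/-- A sequential motion plan: at each time step at most one agent changes vertex. -/
def MAPF.SequentialPlan (M : MAPF) (π : M.A → ℕ → M.V) : Prop :=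
  ∀ τ : ℕ, 0 < τ → ∀ r r' : M.A,
    π r (τ - 1) ≠ π r τ → π r' (τ - 1) ≠ π r' τ → r = r'

/-- A literal: a variable index together with a polarity. -/
structure Lit where
  var : ℕ
  positive : Bool
deriving DecidableEq

/-- Evaluation of a literal under an assignment. -/
def Lit.eval (a : ℕ → Bool) (l : Lit) : Bool :=
  if l.positive then a l.var else !(a l.var)

/-- A 3-clause: three literals. -/
abbrev Clause3 := Lit × Lit × Lit

def Clause3.eval (a : ℕ → Bool) (c : Clause3) : Bool :=
  c.1.eval a || c.2.1.eval a || c.2.2.eval a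

/-- A 3-CNF formula: a list of 3-clauses. -/
abbrev CNF3 := List Clause3

def CNF3.Satisfies (a : ℕ → Bool) (φ : CNF3) : Prop :=
  ∀ c ∈ φ, c.eval a = true

def CNF3.Satisfiable (φ : CNF3) : Prop :=
  ∃ a : ℕ → Bool, CNF3.Satisfies a φ

/-- The literal at occurrence `(j, i)`: position `i` of clause `j`. -/
def CNF3.litAt (φ : CNF3) (j : Fin φ.length) (i : Fin 3) : Lit :=
  if i = 0 then (φ.get j).1 else if i = 1 then (φ.get j).2.1 else (φ.get j).2.2

/-- The set of variables of a 3-CNF formula. -/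
def CNF3.vars (φ : CNF3) : Finset ℕ :=
  ((φ.map fun c => [c.1.var, c.2.1.var, c.2.2.var]).flatten).toFinset

lemma CNF3.litAt_var_mem (φ : CNF3) (j : Fin φ.length) (i : Fin 3) :
    (φ.litAt j i).var ∈ φ.vars := by
  have hc : φ.get j ∈ φ := List.get_mem φ j
  simp only [CNF3.vars, List.mem_toFinset, List.mem_flatten, List.mem_map]
  refine ⟨[(φ.get j).1.var, (φ.get j).2.1.var, (φ.get j).2.2.var], ⟨φ.get j, hc, rfl⟩, ?_⟩
  unfold CNF3.litAt
  fin_cases i <;> simp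

/-- The variables of `φ`, as a type (one per variable gadget / blocker agent). -/
abbrev CNF3.Vars (φ : CNF3) : Type := {n : ℕ // n ∈ φ.vars}

/-- Cells of the planar integer grid. -/
abbrev Cell := ℤ × ℤ

/-- The grid graph on a finite set of cells: two cells are adjacent iff their
L¹-distance is 1. -/
def gridGraph (cells : Finset Cell) : SimpleGraph {c : Cell // c ∈ cells} where
  Adj u v := (u.1.1 - v.1.1).natAbs + (u.1.2 - v.1.2).natAbs = 1
  symm := by
    constructor
    intro u v h
    omega
  loopless := by constructor; intro u h; simp at h

/-- The agents of the monotone construction `M(φ)`: one clause agent per clause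
(`Sum.inl`), and one literal agent per literal occurrence (`Sum.inr`). -/
abbrev MonoAgents (φ : CNF3) : Type := Fin φ.length ⊕ (Fin φ.length × Fin 3)

/-- The construction `M(φ)` of the paper (monotone case): a MAPF instance on a
grid graph with 3 rows, built from a room with the clause agents' starts, a
variable gadget for each variable (with two internally disjoint equal-length
shortest entrance-to-exit traversal paths, the top one carrying the starts of
the positive literal agents and the bottom one the starts of the negative
literal agents), and a clause gadget for each clause (its middle row carrying
the targets of the clause's three literal agents and its top row the target of
the clause agent, followed by an empty column that lets the clause agent reach
its target, via a strictly longer path, even when all three literal targets are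
occupied). -/
structure MonoConstruction (φ : CNF3) where
  /-- the cells of the grid graph -/
  cells : Finset Cell
  /-- the grid has 3 rows -/
  threeRows : ∀ c ∈ cells, 0 ≤ c.2 ∧ c.2 ≤ 2
  /-- start/target of the clause agents -/
  sC : Fin φ.length → {c : Cell // c ∈ cells}
  tC : Fin φ.length → {c : Cell // c ∈ cells}
  /-- start/target of the literal agents -/
  sL : Fin φ.length × Fin 3 → {c : Cell // c ∈ cells}
  tL : Fin φ.length × Fin 3 → {c : Cell // c ∈ cells}
  /-- starts are pairwise distinct -/
  starts_inj : Function.Injective (Sum.elim sC sL)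
  /-- targets are pairwise distinct -/
  targets_inj : Function.Injective (Sum.elim tC tL)
  /-- the one-cell entrance of each variable gadget -/
  entrance : φ.Vars → {c : Cell // c ∈ cells}
  /-- the one-cell exit of each variable gadget -/
  exitC : φ.Vars → {c : Cell // c ∈ cells}
  /-- the top traversal path of each variable gadget -/
  topWalk : (v : φ.Vars) → (gridGraph cells).Walk (entrance v) (exitC v)
  /-- the bottom traversal path of each variable gadget -/
  botWalk : (v : φ.Vars) → (gridGraph cells).Walk (entrance v) (exitC v)
  top_isPath : ∀ v, (topWalk v).IsPath
  bot_isPath : ∀ v, (botWalk v).IsPath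
  /-- the top path is a shortest entrance-to-exit path -/
  top_shortest : ∀ v, (topWalk v).length = (gridGraph cells).dist (entrance v) (exitC v)
  /-- the bottom path is a shortest entrance-to-exit path, of the same length -/
  bot_shortest : ∀ v, (botWalk v).length = (gridGraph cells).dist (entrance v) (exitC v)
  /-- the two traversal paths are internally disjoint -/
  internal_disjoint : ∀ v c, c ∈ (topWalk v).support → c ∈ (botWalk v).support →
    c = entrance v ∨ c = exitC v
  /-- the top path runs along the top row of the grid -/
  top_row : ∀ v c, c ∈ (topWalk v).support → c ≠ entrance v → c ≠ exitC v → c.1.2 = 2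
  /-- these are the only two shortest entrance-to-exit traversal paths -/
  two_paths : ∀ v (p : (gridGraph cells).Walk (entrance v) (exitC v)), p.IsPath →
    p.length = (gridGraph cells).dist (entrance v) (exitC v) →
    p = topWalk v ∨ p = botWalk v
  /-- starts of positive literal agents lie on the top path of their variable's gadget -/
  pos_start_on_top : ∀ (j : Fin φ.length) (i : Fin 3), (φ.litAt j i).positive = true →
    sL (j, i) ∈ (topWalk ⟨(φ.litAt j i).var, φ.litAt_var_mem j i⟩).support
  /-- starts of negative literal agents lie on the bottom path of their variable's gadget -/
  neg_start_on_bot : ∀ (j : Fin φ.length) (i : Fin 3), (φ.litAt j i).positive = false →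
    sL (j, i) ∈ (botWalk ⟨(φ.litAt j i).var, φ.litAt_var_mem j i⟩).support
  /-- literal agents' targets are on the middle row (of their clause's gadget) -/
  tL_middleRow : ∀ o, (tL o).1.2 = 1
  /-- clause agents' targets are on the top row (of their clause's gadget) -/
  tC_topRow : ∀ j, (tC j).1.2 = 2
  /-- every shortest path of a clause agent traverses every variable gadget,
  entering at its entrance and leaving at its exit -/
  clause_shortest_traverses : ∀ (j : Fin φ.length) (v : φ.Vars)
    (p : (gridGraph cells).Walk (sC j) (tC j)),
    p.length = (gridGraph cells).dist (sC j) (tC j) →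
    entrance v ∈ p.support ∧ exitC v ∈ p.support
  /-- the empty column: each clause agent can reach its target (via a strictly
  longer path) even when the three literal targets of its clause gadget are occupied -/
  detour : ∀ j : Fin φ.length, ∃ p : (gridGraph cells).Walk (sC j) (tC j),
    (gridGraph cells).dist (sC j) (tC j) < p.length ∧ ∀ i : Fin 3, tL (j, i) ∉ p.support

/-- The MAPF instance determined by the construction `M(φ)`. -/
def MonoConstruction.toMAPF {φ : CNF3} (K : MonoConstruction φ) : MAPF where
  V := {c : Cell // c ∈ K.cells}
  G := gridGraph K.cells
  A := MonoAgents φ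
  fintypeA := inferInstance
  s := Sum.elim K.sC K.sL
  t := Sum.elim K.tC K.tL
  s_inj := K.starts_inj
  t_inj := K.targets_inj

/-- `f` moves at time `τ` (changes vertex from `τ - 1` to `τ`). -/
def IsMoveAt {V : Type} (f : ℕ → V) (τ : ℕ) : Prop := 0 < τ ∧ f (τ - 1) ≠ f τ

/-- The literal agent `o` moves (strictly) after the last clause agent moves. -/
def MovesAfterClauseAgents {φ : CNF3} (K : MonoConstruction φ)
    (π : K.toMAPF.A → ℕ → K.toMAPF.V) (o : Fin φ.length × Fin 3) : Prop :=
  ∀ (j : Fin φ.length) (τ τ' : ℕ),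
    IsMoveAt (π (Sum.inl j)) τ → IsMoveAt (π (Sum.inr o)) τ' → τ < τ'


/- ### Auxiliary lemmas for Statement 15 ### -/

open SimpleGraph

open scoped Classical in
lemma aux_walk {V : Type} {G : SimpleGraph V} (f : ℕ → V)
    (hstep : ∀ τ : ℕ, 0 < τ → f (τ - 1) = f τ ∨ G.Adj (f (τ - 1)) (f τ)) (T : ℕ) :
    ∃ w : G.Walk (f 0) (f T),
      w.length = ((Finset.Icc 1 T).filter (fun τ => f (τ - 1) ≠ f τ)).card ∧
      ∀ x ∈ w.support, ∃ σ, f σ = x := by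
  induction T with
  | zero =>
    refine ⟨.nil, by simp, ?_⟩
    intro x hx; simp [Walk.support_nil] at hx; exact ⟨0, hx.symm⟩
  | succ T ih =>
    obtain ⟨w, hlen, hsup⟩ := ih
    have hstep' := hstep (T + 1) (Nat.succ_pos T)
    simp only [Nat.add_sub_cancel] at hstep'
    have hIcc : Finset.Icc 1 (T + 1) = insert (T + 1) (Finset.Icc 1 T) := by
      ext x; simp [Finset.mem_Icc]; omega
    rcases hstep' with h | h
    · refine ⟨w.copy rfl h, ?_, ?_⟩
      · rw [Walk.length_copy, hlen, hIcc, Finset.filter_insert]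
        simp only [Nat.add_sub_cancel]
        rw [if_neg (by simpa using h)]
      · intro x hx; rw [Walk.support_copy] at hx; exact hsup x hx
    · refine ⟨w.concat h, ?_, ?_⟩
      · rw [Walk.length_concat, hlen, hIcc, Finset.filter_insert]
        rw [if_pos (by simpa using h.ne)]
        rw [Finset.card_insert_of_notMem (by simp [Finset.mem_Icc])]
      · intro x hx
        rw [Walk.support_concat, List.mem_append] at hx
        rcases hx with hx | hx
        · exact hsup x hx
        · simp at hx; exact ⟨T + 1, hx.symm⟩

open scoped Classical in
lemma pathLength_eq_card {V : Type} (f : ℕ → V) {c : V} (T : ℕ)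
    (hT : ∀ τ, T ≤ τ → f τ = c) :
    pathLength f = ((Finset.Icc 1 T).filter (fun τ => f (τ - 1) ≠ f τ)).card := by
  unfold pathLength
  rw [← Set.ncard_coe_finset]
  congr 1
  ext τ
  simp only [Set.mem_setOf_eq, Finset.coe_filter, Finset.mem_Icc]
  constructor
  · rintro ⟨h1, h2⟩
    refine ⟨⟨h1, ?_⟩, h2⟩
    by_contra hτ
    push_neg at hτ
    exact h2 (by rw [hT (τ - 1) (by omega), hT τ (by omega)])
  · rintro ⟨⟨h1, _⟩, h2⟩; exact ⟨h1, h2⟩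

lemma exists_walk_of_traj {V : Type} {G : SimpleGraph V} {f : ℕ → V}
    (hstep : ∀ τ : ℕ, 0 < τ → f (τ - 1) = f τ ∨ G.Adj (f (τ - 1)) (f τ))
    {t : V} {T : ℕ} (hT : ∀ τ, T ≤ τ → f τ = t) :
    ∃ w : G.Walk (f 0) t, w.length = pathLength f ∧ ∀ x ∈ w.support, ∃ σ, f σ = x := by
  classical
  obtain ⟨w, hl, hs⟩ := aux_walk (G := G) f hstep T
  refine ⟨w.copy rfl (hT T le_rfl), ?_, ?_⟩
  · rw [Walk.length_copy, hl, pathLength_eq_card f T hT]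
  · intro x hx; rw [Walk.support_copy] at hx; exact hs x hx

lemma stay_at_start {V : Type} (f : ℕ → V) (n : ℕ)
    (h : ∀ ρ, ρ ≤ n → ¬ IsMoveAt f ρ) : f n = f 0 := by
  induction n with
  | zero => rfl
  | succ n ih =>
    have h1 : f n = f (n + 1) := by
      have := h (n + 1) le_rfl
      unfold IsMoveAt at this
      push_neg at this
      simpa using this (Nat.succ_pos n)
    rw [← h1]
    exact ih fun ρ hρ => h ρ (hρ.trans (Nat.le_succ n))

lemma const_after {V : Type} (f : ℕ → V) (m : ℕ)
    (h : ∀ ρ, m < ρ → ¬ IsMoveAt f ρ) : ∀ σ, m ≤ σ → f σ = f m := by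
  intro σ hσ
  induction σ, hσ using Nat.le_induction with
  | base => rfl
  | succ σ hσ ih =>
    have h1 : f σ = f (σ + 1) := by
      have := h (σ + 1) (by omega)
      unfold IsMoveAt at this
      push_neg at this
      simpa using this (Nat.succ_pos σ)
    rw [← h1, ih]

lemma shortest_segment {V : Type} {G : SimpleGraph V} {s t a b : V}
    (p : G.Walk s t) (hp : p.IsPath) (hlen : p.length = G.dist s t)
    (ha : a ∈ p.support) (hb : b ∈ p.support) :
    ∃ q : G.Walk a b, q.IsPath ∧ q.length = G.dist a b ∧
      ∀ x ∈ q.support, x ∈ p.support := by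
  classical
  have hsplit := p.take_spec ha
  have hb' : b ∈ (p.takeUntil a ha).support ∨ b ∈ (p.dropUntil a ha).support := by
    rw [← Walk.mem_support_append_iff, hsplit]; exact hb
  have hplen : (p.takeUntil a ha).length + (p.dropUntil a ha).length = p.length := by
    rw [← Walk.length_append, hsplit]
  rcases hb' with hb1 | hb2
  · -- b appears before a : take segment b → a inside takeUntil, reverse it
    set p1 := p.takeUntil a ha with hp1def
    have hp1 : p1.IsPath := hp.takeUntil ha
    have hsplit1 := p1.take_spec hb1
    have hq1len : (p1.takeUntil b hb1).length + (p1.dropUntil b hb1).length = p1.length := by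
      rw [← Walk.length_append, hsplit1]
    set q1 := p1.dropUntil b hb1 with hq1def
    obtain ⟨q0, hq0⟩ := (Reachable.exists_walk_length_eq_dist ⟨q1⟩ : ∃ w : G.Walk b a, w.length = G.dist b a)
    have hd : G.dist s t ≤ (((p1.takeUntil b hb1).append q0).append (p.dropUntil a ha)).length :=
      dist_le _
    rw [Walk.length_append, Walk.length_append, hq0] at hd
    have hd1 : G.dist b a ≤ q1.length := dist_le q1
    have hq1 : q1.length = G.dist a b := by
      rw [dist_comm]; omega
    refine ⟨q1.reverse, (hp1.dropUntil hb1).reverse, by rw [Walk.length_reverse, hq1], ?_⟩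
    intro x hx
    rw [Walk.support_reverse, List.mem_reverse] at hx
    exact p.support_takeUntil_subset ha (p1.support_dropUntil_subset hb1 hx)
  · -- b appears after a
    set p2 := p.dropUntil a ha with hp2def
    have hp2 : p2.IsPath := hp.dropUntil ha
    have hsplit2 := p2.take_spec hb2
    have hq2len : (p2.takeUntil b hb2).length + (p2.dropUntil b hb2).length = p2.length := by
      rw [← Walk.length_append, hsplit2]
    set q := p2.takeUntil b hb2 with hqdef
    obtain ⟨q0, hq0⟩ := (Reachable.exists_walk_length_eq_dist ⟨q⟩ : ∃ w : G.Walk a b, w.length = G.dist a b)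
    have hd : G.dist s t ≤ ((p.takeUntil a ha).append (q0.append (p2.dropUntil b hb2))).length :=
      dist_le _
    rw [Walk.length_append, Walk.length_append, hq0] at hd
    have hd1 : G.dist a b ≤ q.length := dist_le q
    have hq : q.length = G.dist a b := by omega
    refine ⟨q, hp2.takeUntil hb2, hq, ?_⟩
    intro x hx
    exact p.support_dropUntil_subset ha (p2.support_takeUntil_subset hb2 hx)

/-- intermediate claim in the proof of Theorem 1: in a monotone
collision-free motion plan for `M(φ)` of cost `d*(M(φ))`, the set `R⁺` of literal
agents that move after the last clause agent moves cannot contain, for any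
variable `α`, both an agent of a positive occurrence of `α` and an agent of a
negative occurrence of `α`. -/
theorem no_opposite_literals_move_after_clause_agents (φ : CNF3)
    (K : MonoConstruction φ) (π : K.toMAPF.A → ℕ → K.toMAPF.V)
    (hplan : K.toMAPF.IsPlan π) (hcf : K.toMAPF.CollisionFree π)
    (hmono : K.toMAPF.MonotonePlan π)
    (hopt : K.toMAPF.cost π = K.toMAPF.dStar) :
    ∀ α : ℕ, ¬ ∃ o o' : Fin φ.length × Fin 3,
      MovesAfterClauseAgents K π o ∧ MovesAfterClauseAgents K π o' ∧
      (φ.litAt o.1 o.2).var = α ∧ (φ.litAt o.1 o.2).positive = true ∧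
      (φ.litAt o'.1 o'.2).var = α ∧ (φ.litAt o'.1 o'.2).positive = false := by
  classical
  intro α
  rintro ⟨o, o', ho, ho', hvo, hpo, hvo', hno⟩
  have hmemα : α ∈ φ.vars := hvo ▸ φ.litAt_var_mem o.1 o.2
  set v : φ.Vars := ⟨α, hmemα⟩ with hv
  have hsLtop : K.sL o ∈ (K.topWalk v).support := by
    have h := K.pos_start_on_top o.1 o.2 hpo
    have he : (⟨(φ.litAt o.1 o.2).var, φ.litAt_var_mem o.1 o.2⟩ : φ.Vars) = v :=
      Subtype.ext hvo
    rw [he] at h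
    simpa using h
  have hsLbot : K.sL o' ∈ (K.botWalk v).support := by
    have h := K.neg_start_on_bot o'.1 o'.2 hno
    have he : (⟨(φ.litAt o'.1 o'.2).var, φ.litAt_var_mem o'.1 o'.2⟩ : φ.Vars) = v :=
      Subtype.ext hvo'
    rw [he] at h
    simpa using h
  -- per-agent optimality
  have hle : ∀ r : K.toMAPF.A,
      K.toMAPF.G.dist (K.toMAPF.s r) (K.toMAPF.t r) ≤ pathLength (π r) := by
    intro r
    obtain ⟨h0, ⟨T, hT⟩, hstep⟩ := hplan r
    obtain ⟨w, hwl, -⟩ := exists_walk_of_traj (G := K.toMAPF.G) hstep hT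
    rw [← hwl, ← h0]
    exact SimpleGraph.dist_le w
  have key : ∀ r : K.toMAPF.A,
      pathLength (π r) = K.toMAPF.G.dist (K.toMAPF.s r) (K.toMAPF.t r) := by
    have h := (Finset.sum_eq_sum_iff_of_le (fun r _ => hle r)).1 hopt.symm
    exact fun r => (h r (Finset.mem_univ r)).symm
  -- the clause agent of clause o.1
  set cj : K.toMAPF.A := Sum.inl o.1 with hcjdef
  obtain ⟨h0, ⟨T, hT⟩, hstep⟩ := hplan cj
  obtain ⟨w0, hw0len, hw0sup⟩ := exists_walk_of_traj (G := K.toMAPF.G) hstep hT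
  have hw0sup' := hw0sup
  -- its start and target differ
  have hst : K.toMAPF.s cj ≠ K.toMAPF.t cj := by
    intro h
    have hnil : ((SimpleGraph.Walk.nil :
        (gridGraph K.cells).Walk (K.sC o.1) (K.sC o.1)).copy rfl h).length
        = (gridGraph K.cells).dist (K.sC o.1) (K.tC o.1) := by
      erw [SimpleGraph.Walk.length_copy, SimpleGraph.Walk.length_nil]
      have h' : K.sC o.1 = K.tC o.1 := h
      rw [← h', SimpleGraph.dist_self]
    obtain ⟨hent, hexit⟩ := K.clause_shortest_traverses o.1 v _ hnil
    erw [SimpleGraph.Walk.support_copy, SimpleGraph.Walk.support_nil,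
      List.mem_singleton] at hent hexit
    have hlen0 : (K.topWalk v).length = 0 := by
      rw [K.top_shortest v, hent, hexit, SimpleGraph.dist_self]
    have h1 := SimpleGraph.Walk.length_support (K.topWalk v)
    rw [hlen0] at h1
    obtain ⟨a, hsupp1⟩ := List.length_eq_one_iff.1 h1
    have hea : K.entrance v = a := by
      have := (K.topWalk v).start_mem_support
      rw [hsupp1, List.mem_singleton] at this; exact this
    rw [hsupp1, List.mem_singleton, ← hea] at hsLtop
    have : (Sum.inl o.1 : MonoAgents φ) = Sum.inr o := by
      apply K.starts_inj
      show K.sC o.1 = K.sL o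
      rw [hsLtop, hent]
    simp at this
  -- the finite set of move times of the clause agent
  set S := (Finset.Icc 1 T).filter (fun τ => π cj (τ - 1) ≠ π cj τ) with hSdef
  have hmoveS : ∀ ρ, IsMoveAt (π cj) ρ → ρ ∈ S := by
    rintro ρ ⟨hρ, hne⟩
    by_cases hρT : ρ ≤ T
    · exact Finset.mem_filter.2 ⟨Finset.mem_Icc.2 ⟨hρ, hρT⟩, hne⟩
    · exact absurd (by rw [hT (ρ - 1) (by omega), hT ρ (by omega)]) hne
  have hSne : S.Nonempty := by
    rcases Finset.eq_empty_or_nonempty S with hE | h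
    · exfalso
      apply hst
      rw [← h0, ← hT T le_rfl]
      exact (stay_at_start (π cj) T (fun ρ _ hm =>
        Finset.notMem_empty ρ (hE ▸ hmoveS ρ hm))).symm
    · exact h
  set τ1 := S.max' hSne with hτ1def
  have hτ1S : τ1 ∈ S := S.max'_mem hSne
  have hmove1 : IsMoveAt (π cj) τ1 := by
    have h1 := Finset.mem_filter.1 hτ1S
    have h2 := Finset.mem_Icc.1 h1.1
    exact ⟨by omega, h1.2⟩
  have hconst : ∀ σ, τ1 ≤ σ → π cj σ = π cj τ1 :=
    const_after (π cj) τ1 (fun ρ hρ hm => by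
      have := S.le_max' ρ (hmoveS ρ hm); omega)
  -- the two literal agents stay on their starts until after τ1
  have hstayo : ∀ σ, σ ≤ τ1 → π (Sum.inr o) σ = K.sL o := by
    intro σ hσ
    have h0o := (hplan (Sum.inr o)).1
    rw [stay_at_start (π (Sum.inr o)) σ (fun ρ hρ hm => by
      have := ho o.1 τ1 ρ hmove1 hm; omega), h0o]
    rfl
  have hstayo' : ∀ σ, σ ≤ τ1 → π (Sum.inr o') σ = K.sL o' := by
    intro σ hσ
    have h0o := (hplan (Sum.inr o')).1
    rw [stay_at_start (π (Sum.inr o')) σ (fun ρ hρ hm => by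
      have := ho' o.1 τ1 ρ hmove1 hm; omega), h0o]
    rfl
  -- shortest path of the clause agent
  obtain ⟨w, hwlen, hwsup⟩ : ∃ w : (gridGraph K.cells).Walk (K.sC o.1) (K.tC o.1),
      w.length = (gridGraph K.cells).dist (K.sC o.1) (K.tC o.1) ∧
      ∀ x ∈ w.support, ∃ σ, π cj σ = x := by
    refine ⟨w0.copy h0 rfl, ?_, ?_⟩
    · erw [SimpleGraph.Walk.length_copy, hw0len]; exact key cj
    · intro x hx; erw [SimpleGraph.Walk.support_copy] at hx; exact hw0sup x hx
  have hppath := w.bypass_isPath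
  have hpd : w.bypass.length = (gridGraph K.cells).dist (K.sC o.1) (K.tC o.1) := by
    have h1 := w.length_bypass_le
    have h2 := SimpleGraph.dist_le w.bypass
    omega
  obtain ⟨hent, hexit⟩ := K.clause_shortest_traverses o.1 v w.bypass hpd
  obtain ⟨q, hqp, hqlen, hqsub⟩ := shortest_segment w.bypass hppath hpd hent hexit
  have hvisit : ∀ x : {c : Cell // c ∈ K.cells}, x ∈ q.support →
      ∃ σ, σ ≤ τ1 ∧ π cj σ = x := by
    intro x hx
    obtain ⟨σ, hσ⟩ := hwsup x (w.support_bypass_subset (hqsub x hx))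
    by_cases hσ1 : σ ≤ τ1
    · exact ⟨σ, hσ1, hσ⟩
    · exact ⟨τ1, le_rfl, by rw [← hconst σ (by omega)]; exact hσ⟩
  rcases K.two_paths v q hqp hqlen with hq | hq
  · rw [← hq] at hsLtop
    obtain ⟨σ, hσ1, hσ2⟩ := hvisit _ hsLtop
    exact (hcf cj (Sum.inr o) (by rw [hcjdef]; exact Sum.inl_ne_inr)).1 σ (by rw [hσ2, hstayo σ hσ1])
  · rw [← hq] at hsLbot
    obtain ⟨σ, hσ1, hσ2⟩ := hvisit _ hsLbot
    exact (hcf cj (Sum.inr o') (by rw [hcjdef]; exact Sum.inl_ne_inr)).1 σ (by rw [hσ2, hstayo' σ hσ1])
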